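/- Let α ∈ ℂ and n ≥ 1. For every x ∈ ℂ with x·(x − i/2)·(x + i/2) ≠ 0, ϑ_1(α,x)·(𝒟(𝒟ϑ_n(α,·)))(x) = n·(n−1)·ϑ_{n−1}(α,x), where ϑ_1(α,x) = α² + x². -/

import Mathlib

open Complex Finset

/-- Wilson divided-difference operator. -/
noncomputable def Dw (f : ℂ → ℂ) (x : ℂ) : ℂ :=
  (f (x + I/2) - f (x - I/2)) / (2 * I * x)

/-- ϑ_n(α,x) = ∏_{j=0}^{n−1}((α + j)² + x²) = (α+ix)_n (α−ix)_n. -/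
noncomputable def vartheta (α : ℂ) (n : ℕ) (x : ℂ) : ℂ :=
  ∏ j ∈ Finset.range n, ((α + j)^2 + x^2)

noncomputable def Ppoch (n : ℕ) (t : ℂ) : ℂ := ∏ j ∈ Finset.range n, (t + j)

lemma Ppoch_succ (n : ℕ) (t : ℂ) : Ppoch (n+1) t = Ppoch n t * (t + n) := by
  simp [Ppoch, Finset.prod_range_succ]

lemma Ppoch_succ' (n : ℕ) (t : ℂ) : Ppoch (n+1) t = t * Ppoch n (t+1) := by
  unfold Ppoch
  rw [Finset.prod_range_succ']
  push_cast
  rw [add_zero, mul_comm]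
  congr 1
  exact Finset.prod_congr rfl fun j _ => by ring

lemma key (n : ℕ) : ∀ a b : ℂ,
    Ppoch (n+1) (a-1/2) * Ppoch (n+1) (b+1/2) - Ppoch (n+1) (a+1/2) * Ppoch (n+1) (b-1/2)
      = ((n:ℂ)+1) * (a-b) * Ppoch n (a+1/2) * Ppoch n (b+1/2) := by
  induction n with
  | zero =>
    intro a b
    simp [Ppoch]
    ring
  | succ n ih =>
    intro a b
    have H := ih (a+1) (b+1)
    have e1 : (a+1) - 1/2 = a + 1/2 := by ring
    have e2 : (b+1) + 1/2 = b + 3/2 := by ring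
    have e3 : (a+1) + 1/2 = a + 3/2 := by ring
    have e4 : (b+1) - 1/2 = b + 1/2 := by ring
    have e5 : (a+1) - (b+1) = a - b := by ring
    rw [e1, e2, e3, e4, e5] at H
    rw [Ppoch_succ' (n+1) (a-1/2), Ppoch_succ' (n+1) (b+1/2),
        Ppoch_succ' (n+1) (a+1/2), Ppoch_succ' (n+1) (b-1/2)]
    have f1 : a - 1/2 + 1 = a + 1/2 := by ring
    have f2 : b + 1/2 + 1 = b + 3/2 := by ring
    have f3 : a + 1/2 + 1 = a + 3/2 := by ring
    have f4 : b - 1/2 + 1 = b + 1/2 := by ring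
    rw [f1, f2, f3, f4]
    have hA1 : Ppoch (n+1) (a+1/2) = (a+1/2) * Ppoch n (a+3/2) := by
      rw [Ppoch_succ', f3]
    have hB1 : Ppoch (n+1) (b+1/2) = (b+1/2) * Ppoch n (b+3/2) := by
      rw [Ppoch_succ', f2]
    have hA3 : Ppoch (n+1) (a+3/2) = Ppoch n (a+3/2) * (a+3/2+n) := by
      rw [Ppoch_succ]
    rw [hA1, hB1, hA3] at H ⊢
    push_cast
    linear_combination (a-1/2)*(b+1/2)*H

lemma vartheta_eq (α : ℂ) (n : ℕ) (y : ℂ) :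
    vartheta α n y = Ppoch n (α + I*y) * Ppoch n (α - I*y) := by
  unfold vartheta Ppoch
  rw [← Finset.prod_mul_distrib]
  apply Finset.prod_congr rfl
  intro j _
  linear_combination (y^2) * Complex.I_sq

lemma Dw_vartheta (α : ℂ) (n : ℕ) (x : ℂ) (hx : x ≠ 0) :
    Dw (fun t => vartheta α (n+1) t) x = ((n:ℂ)+1) * vartheta (α+1/2) n x := by
  unfold Dw
  have h1 : α + I*(x + I/2) = (α + I*x) - 1/2 := by
    linear_combination (1/2 : ℂ) * Complex.I_sq
  have h2 : α - I*(x + I/2) = (α - I*x) + 1/2 := by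
    linear_combination (-1/2 : ℂ) * Complex.I_sq
  have h3 : α + I*(x - I/2) = (α + I*x) + 1/2 := by
    linear_combination (-1/2 : ℂ) * Complex.I_sq
  have h4 : α - I*(x - I/2) = (α - I*x) - 1/2 := by
    linear_combination (1/2 : ℂ) * Complex.I_sq
  simp only [vartheta_eq, h1, h2, h3, h4]
  have hab : (α + I*x) - (α - I*x) = 2*I*x := by ring
  have hK := key n (α + I*x) (α - I*x)
  rw [hab] at hK
  rw [hK]
  have h5 : α + 1/2 + I*x = (α + I*x) + 1/2 := by ring
  have h6 : α + 1/2 - I*x = (α - I*x) + 1/2 := by ring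
  rw [h5, h6]
  have h2Ix : (2*I*x) ≠ 0 := by
    simp [I_ne_zero, hx]
  field_simp

lemma vartheta_shift (α : ℂ) (n : ℕ) (x : ℂ) :
    vartheta α (n+1) x = (α^2 + x^2) * vartheta (α+1) n x := by
  unfold vartheta
  rw [Finset.prod_range_succ']
  push_cast
  rw [add_zero, mul_comm]
  congr 1
  exact Finset.prod_congr rfl fun j _ => by ring

theorem stmt_7 (α : ℂ) (n : ℕ) (hn : 1 ≤ n) :
    ∀ x : ℂ, x * (x - I/2) * (x + I/2) ≠ 0 →
      (α^2 + x^2) * Dw (Dw (fun t => vartheta α n t)) x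
        = (n : ℂ) * ((n : ℂ) - 1) * vartheta α (n-1) x := by
  intro x hx
  have hx0 : x ≠ 0 := fun h => hx (by simp [h])
  have hxp : x + I/2 ≠ 0 := fun h => hx (by simp [h])
  have hxm : x - I/2 ≠ 0 := fun h => hx (by simp [h])
  obtain ⟨m, rfl⟩ : ∃ m, n = m + 1 := ⟨n - 1, (Nat.succ_pred_eq_of_pos hn).symm⟩
  have houter : Dw (Dw (fun t => vartheta α (m+1) t)) x
      = ((m:ℂ)+1) * Dw (fun t => vartheta (α+1/2) m t) x := by
    unfold Dw
    rw [show (fun t => vartheta α (m+1) t) = fun t => vartheta α (m+1) t from rfl]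
    have hp := Dw_vartheta α m (x + I/2) hxp
    have hm' := Dw_vartheta α m (x - I/2) hxm
    unfold Dw at hp hm'
    rw [hp, hm']
    ring
  rw [houter]
  rcases m with _ | k
  · -- n = 1
    simp only [Nat.cast_zero]
    have : Dw (fun t => vartheta (α+1/2) 0 t) x = 0 := by
      unfold Dw vartheta
      simp
    rw [this]
    simp
  · rw [Dw_vartheta (α+1/2) k x hx0]
    have hs : (α+1/2) + 1/2 = α + 1 := by ring
    rw [hs]
    have : vartheta α (k+1+1-1) x = (α^2+x^2) * vartheta (α+1) k x := by
      simpa using vartheta_shift α k x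
    rw [this]
    push_cast
    ring
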